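/- Let R > 0 and let f(r) = r√(4R² − r²) − 4R²·arcsin(r/(2R)) + 2πR² for 0 < r < 2R (the profile of the bubble set of radius R in the Heisenberg group). Then for all r ∈ (0, 2R): the horizontal mean curvature is H(r) = 1/R, the horizontal Gauss curvature is K(r) = 1/R² − 2/r², and the symplectic distortion is Q(r) = (Rr/√(4R² − r²))·(1/R² − 2/r²). -/

import Mathlib

lemma aux_rpow (a : ℝ) (ha : 0 ≤ a) : ((a^2 : ℝ)) ^ ((3:ℝ)/2) = a ^ 3 := by
  rw [← Real.rpow_natCast a 2, ← Real.rpow_mul ha]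
  norm_num


lemma bubble_deriv (R : ℝ) (hR : 0 < R) (f : ℝ → ℝ)
    (hf : ∀ s, f s = s * Real.sqrt (4 * R ^ 2 - s ^ 2) -
      4 * R ^ 2 * Real.arcsin (s / (2 * R)) + 2 * Real.pi * R ^ 2)
    (x : ℝ) (hx : x ∈ Set.Ioo (0 : ℝ) (2 * R)) :
    HasDerivAt f (-2 * x ^ 2 / Real.sqrt (4 * R ^ 2 - x ^ 2)) x := by
  obtain ⟨hx0, hx2⟩ := hx
  have hpos : 0 < 4 * R ^ 2 - x ^ 2 := by nlinarith
  set u := Real.sqrt (4 * R ^ 2 - x ^ 2) with hu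
  have hu0 : 0 < u := Real.sqrt_pos.mpr hpos
  have hu2 : u ^ 2 = 4 * R ^ 2 - x ^ 2 := Real.sq_sqrt hpos.le
  have h1 : HasDerivAt (fun s : ℝ => 4 * R ^ 2 - s ^ 2) (-(2 * x)) x := by
    simpa using (hasDerivAt_pow 2 x).const_sub (4 * R ^ 2)
  have hsq : HasDerivAt (fun s : ℝ => Real.sqrt (4 * R ^ 2 - s ^ 2))
      (-x / u) x := by
    have := (Real.hasDerivAt_sqrt hpos.ne').comp x h1
    refine this.congr_deriv ?_
    field_simp
    ring
  have hmul : HasDerivAt (fun s : ℝ => s * Real.sqrt (4 * R ^ 2 - s ^ 2))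
      (1 * u + x * (-x / u)) x := (hasDerivAt_id x).mul hsq
  have h2 : HasDerivAt (fun s : ℝ => s / (2 * R)) (1 / (2 * R)) x := by
    simpa using (hasDerivAt_id x).div_const (2 * R)
  have hne1 : x / (2 * R) ≠ -1 := by
    have : 0 < x / (2 * R) := by positivity
    linarith
  have hne1' : x / (2 * R) ≠ 1 := by
    have : x / (2 * R) < 1 := (div_lt_one (by linarith)).mpr hx2
    linarith
  have hroot : Real.sqrt (1 - (x / (2 * R)) ^ 2) = u / (2 * R) := by
    rw [show (1 : ℝ) - (x / (2 * R)) ^ 2 = (4 * R ^ 2 - x ^ 2) / (2 * R) ^ 2 by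
      field_simp; ring]
    rw [Real.sqrt_div hpos.le, Real.sqrt_sq (by linarith)]
  have harcsin : HasDerivAt (fun s : ℝ => 4 * R ^ 2 * Real.arcsin (s / (2 * R)))
      (4 * R ^ 2 * (1 / Real.sqrt (1 - (x / (2 * R)) ^ 2) * (1 / (2 * R)))) x :=
    (((Real.hasDerivAt_arcsin hne1 hne1').comp x h2)).const_mul (4 * R ^ 2)
  have hfe : f = fun s => s * Real.sqrt (4 * R ^ 2 - s ^ 2) -
      4 * R ^ 2 * Real.arcsin (s / (2 * R)) + 2 * Real.pi * R ^ 2 := funext hf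
  rw [hfe]
  have := (hmul.sub harcsin).add_const (2 * Real.pi * R ^ 2)
  refine this.congr_deriv ?_
  rw [hroot]
  field_simp
  linear_combination hu2

lemma bubble_deriv2 (R : ℝ) (hR : 0 < R) (x : ℝ) (hx : x ∈ Set.Ioo (0 : ℝ) (2 * R)) :
    HasDerivAt (fun s : ℝ => -2 * s ^ 2 / Real.sqrt (4 * R ^ 2 - s ^ 2))
      (-(16 * R ^ 2 * x - 2 * x ^ 3) /
        ((4 * R ^ 2 - x ^ 2) * Real.sqrt (4 * R ^ 2 - x ^ 2))) x := by
  obtain ⟨hx0, hx2⟩ := hx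
  have hpos : 0 < 4 * R ^ 2 - x ^ 2 := by nlinarith
  set u := Real.sqrt (4 * R ^ 2 - x ^ 2) with hu
  have hu0 : 0 < u := Real.sqrt_pos.mpr hpos
  have hu2 : u ^ 2 = 4 * R ^ 2 - x ^ 2 := Real.sq_sqrt hpos.le
  have h1 : HasDerivAt (fun s : ℝ => 4 * R ^ 2 - s ^ 2) (-(2 * x)) x := by
    simpa using (hasDerivAt_pow 2 x).const_sub (4 * R ^ 2)
  have hsq : HasDerivAt (fun s : ℝ => Real.sqrt (4 * R ^ 2 - s ^ 2)) (-x / u) x := by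
    have := (Real.hasDerivAt_sqrt hpos.ne').comp x h1
    refine this.congr_deriv ?_
    field_simp
    ring
  have hnum : HasDerivAt (fun s : ℝ => -2 * s ^ 2) (-2 * (2 * x)) x := by
    simpa using (hasDerivAt_pow 2 x).const_mul (-2 : ℝ)
  have := hnum.div hsq hu0.ne'
  refine this.congr_deriv ?_
  field_simp
  rw [← hu]
  linear_combination 2 * x ^ 2 * hu2

/-- Horizontal mean curvature, horizontal Gauss curvature and symplectic
distortion of the bubble set of radius `R` in the Heisenberg group, whose
profile is `f(r) = r√(4R² − r²) − 4R²·arcsin(r/(2R)) + 2πR²`. -/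
theorem bubble_set_curvatures (R : ℝ) (hR : 0 < R) (f : ℝ → ℝ)
    (hf : ∀ s, f s = s * Real.sqrt (4 * R ^ 2 - s ^ 2) -
      4 * R ^ 2 * Real.arcsin (s / (2 * R)) + 2 * Real.pi * R ^ 2) :
    ∀ r ∈ Set.Ioo (0 : ℝ) (2 * R),
      -(4 * r ^ 3 * deriv (deriv f) r + (deriv f r) ^ 3) /
          (r * (4 * r ^ 2 + (deriv f r) ^ 2) ^ ((3 : ℝ) / 2)) = 1 / R ∧
      (4 * r * (8 * r + 2 * deriv f r * deriv (deriv f) r) -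
          16 * (4 * r ^ 2 + (deriv f r) ^ 2)) /
        (4 * r ^ 2 + (deriv f r) ^ 2) ^ 2 = 1 / R ^ 2 - 2 / r ^ 2 ∧
      (r * (8 * r + 2 * deriv f r * deriv (deriv f) r) -
          4 * (4 * r ^ 2 + (deriv f r) ^ 2)) /
        (4 * r ^ 2 + (deriv f r) ^ 2) ^ ((3 : ℝ) / 2) =
        (R * r / Real.sqrt (4 * R ^ 2 - r ^ 2)) * (1 / R ^ 2 - 2 / r ^ 2) := by
  intro r hr
  obtain ⟨hr0, hr2⟩ := hr
  have hpos : 0 < 4 * R ^ 2 - r ^ 2 := by nlinarith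
  set u := Real.sqrt (4 * R ^ 2 - r ^ 2) with hu
  have hu0 : 0 < u := Real.sqrt_pos.mpr hpos
  have hu2 : u ^ 2 = 4 * R ^ 2 - r ^ 2 := Real.sq_sqrt hpos.le
  -- first derivative
  have hA : deriv f r = -2 * r ^ 2 / u :=
    (bubble_deriv R hR f hf r ⟨hr0, hr2⟩).deriv
  -- deriv f agrees with the explicit function on a neighborhood
  have hEq : deriv f =ᶠ[nhds r] fun s => -2 * s ^ 2 / Real.sqrt (4 * R ^ 2 - s ^ 2) := by
    filter_upwards [isOpen_Ioo.mem_nhds (show r ∈ Set.Ioo (0:ℝ) (2*R) from ⟨hr0, hr2⟩)]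
      with s hs
    exact (bubble_deriv R hR f hf s hs).deriv
  have hB : deriv (deriv f) r =
      -(16 * R ^ 2 * r - 2 * r ^ 3) / ((4 * R ^ 2 - r ^ 2) * u) := by
    rw [hEq.deriv_eq]
    exact (bubble_deriv2 R hR r ⟨hr0, hr2⟩).deriv
  -- the key auxiliary identity for the rpow
  have hD : 4 * r ^ 2 + (deriv f r) ^ 2 = (4 * r * R / u) ^ 2 := by
    rw [hA]
    field_simp
    linear_combination 4 * hu2
  have hcube : (4 * r ^ 2 + (deriv f r) ^ 2) ^ ((3:ℝ)/2) =
      64 * r ^ 3 * R ^ 3 / ((4 * R ^ 2 - r ^ 2) * u) := by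
    rw [hD, aux_rpow _ (by positivity)]
    rw [div_pow]
    rw [show u ^ 3 = u ^ 2 * u by ring, hu2]
    ring
  refine ⟨?_, ?_, ?_⟩
  · rw [hcube, hA, hB]
    field_simp
    linear_combination (-8 * r ^ 2) * hu2
  · rw [hA, hB]
    field_simp
    linear_combination (-16 * (4 * R ^ 2 - r ^ 2) * r ^ 2 * (u ^ 2 + (4 * R ^ 2 - r ^ 2)) +
      32 * r ^ 4 * R ^ 2 - 32 * (4 * R ^ 2 - r ^ 2) * r ^ 2 * (r ^ 2 - 2 * R ^ 2)) * hu2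
  · rw [hcube, hA, hB, ← hu2]
    field_simp
    linear_combination (-8 * (u ^ 2 + r ^ 2 + 4 * R ^ 2)) * hu2
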